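/- If κ : [0,∞) → [0,1) is a class K¹ function differentiable on (0,∞), with derivative κ' > 0 on (0,∞), 0 ≤ p < 1, Tc > 0, and y : [0,∞) → [0,∞) is a differentiable function satisfying y'(t) = -(1/((1-p)·Tc)) · κ(y(t))^p / κ'(y(t)) whenever y(t) > 0 and y'(t) = 0 whenever y(t) = 0, then for all t ∈ [0, Tc·κ(y(0))^{1-p}], κ(y(t)) = (κ(y(0))^{1-p} - t/Tc)^{1/(1-p)}, and y(t) = 0 for all t ≥ Tc·κ(y(0))^{1-p}. -/

import Mathlib

def IsClassK1 (kappa : ℝ → ℝ) : Prop :=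
  ContinuousOn kappa (Set.Ici 0) ∧ StrictMonoOn kappa (Set.Ici 0) ∧ kappa 0 = 0 ∧
    Filter.Tendsto kappa Filter.atTop (nhds 1) ∧
    ∀ r ∈ Set.Ici (0 : ℝ), kappa r ∈ Set.Ico (0 : ℝ) 1

/- Exact solution of the comparison ODE
y' = -(1/((1-p)Tc)) κ(y)^p / κ'(y): the function κ(y(t)) equals
(κ(y 0)^(1-p) - t/Tc)^(1/(1-p)) on [0, Tc κ(y 0)^(1-p)], and y(t) = 0 afterwards. -/
theorem comparison_ode_solution (κ κ' : ℝ → ℝ) (hκ : IsClassK1 κ)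
    (hκ' : ∀ r > (0:ℝ), HasDerivAt κ (κ' r) r ∧ 0 < κ' r)
    (p Tc : ℝ) (hp : 0 ≤ p) (hp1 : p < 1) (hTc : 0 < Tc)
    (y y' : ℝ → ℝ) (hy_nonneg : ∀ t ≥ (0:ℝ), 0 ≤ y t)
    (hy_deriv : ∀ t ≥ (0:ℝ), HasDerivAt y (y' t) t)
    (hy_ode : ∀ t ≥ (0:ℝ), 0 < y t →
      y' t = -(1 / ((1 - p) * Tc)) * (κ (y t) ^ p / κ' (y t)))
    (hy_zero : ∀ t ≥ (0:ℝ), y t = 0 → y' t = 0) :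
    (∀ t ∈ Set.Icc (0:ℝ) (Tc * κ (y 0) ^ (1 - p)),
        κ (y t) = (κ (y 0) ^ (1 - p) - t / Tc) ^ (1 / (1 - p))) ∧
    (∀ t ≥ Tc * κ (y 0) ^ (1 - p), y t = 0) := by
  obtain ⟨hκcont, hκmono, hκ0, -, hκIco⟩ := hκ
  have h1p : (0:ℝ) < 1 - p := by linarith
  have h1p' : (1:ℝ) - p ≠ 0 := ne_of_gt h1p
  have hTc' : Tc ≠ 0 := ne_of_gt hTc
  have hκpos : ∀ r : ℝ, 0 < r → 0 < κ r := by
    intro r hr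
    have := hκmono (Set.mem_Ici.2 (le_refl (0:ℝ))) (le_of_lt hr : (0:ℝ) ≤ r) hr
    rwa [hκ0] at this
  have hκnonneg : ∀ r : ℝ, 0 ≤ r → 0 ≤ κ r := by
    intro r hr
    exact (hκIco r hr).1
  -- y' is nonpositive on [0, ∞)
  have hy'_nonpos : ∀ t : ℝ, 0 ≤ t → y' t ≤ 0 := by
    intro t ht
    rcases lt_or_eq_of_le (hy_nonneg t ht) with hpos | hzero
    · rw [hy_ode t ht hpos]
      have hκv := (hκ' (y t) hpos).2
      have hκp : (0:ℝ) < κ (y t) ^ p := Real.rpow_pos_of_pos (hκpos _ hpos) p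
      have h2 : (0:ℝ) < (1 - p) * Tc := by positivity
      have : 0 < 1 / ((1 - p) * Tc) * (κ (y t) ^ p / κ' (y t)) := by positivity
      linarith
    · rw [hy_zero t ht hzero.symm]
  -- y is antitone on [0, ∞)
  have yanti : AntitoneOn y (Set.Ici 0) := by
    apply antitoneOn_of_deriv_nonpos (convex_Ici 0)
    · exact fun t ht => ((hy_deriv t ht).continuousAt).continuousWithinAt
    · intro t ht
      rw [interior_Ici] at ht
      exact ((hy_deriv t (le_of_lt ht)).differentiableAt).differentiableWithinAt
    · intro t ht
      rw [interior_Ici] at ht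
      rw [(hy_deriv t (le_of_lt ht)).deriv]
      exact hy'_nonpos t (le_of_lt ht)
  -- key: energy identity while y stays positive
  have keyA : ∀ t : ℝ, 0 ≤ t → (∀ s ∈ Set.Ico (0:ℝ) t, 0 < y s) →
      κ (y t) ^ (1 - p) + t / Tc = κ (y 0) ^ (1 - p) := by
    intro t ht hpos
    set F : ℝ → ℝ := fun s => κ (y s) ^ (1 - p) + s / Tc with hF
    have hFd : ∀ s ∈ Set.Ico (0:ℝ) t, HasDerivAt F 0 s := by
      intro s hs
      have hys : 0 < y s := hpos s hs
      have hκys : 0 < κ (y s) := hκpos _ hys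
      have hdy : HasDerivAt y (y' s) s := hy_deriv s hs.1
      have hdκ : HasDerivAt κ (κ' (y s)) (y s) := (hκ' (y s) hys).1
      have hdκy : HasDerivAt (fun u => κ (y u)) (κ' (y s) * y' s) s := hdκ.comp s hdy
      have hdr : HasDerivAt (fun x : ℝ => x ^ (1 - p))
          ((1 - p) * κ (y s) ^ (1 - p - 1)) (κ (y s)) :=
        Real.hasDerivAt_rpow_const (Or.inl (ne_of_gt hκys))
      have hdrκy : HasDerivAt (fun u => κ (y u) ^ (1 - p))
          ((1 - p) * κ (y s) ^ (1 - p - 1) * (κ' (y s) * y' s)) s := by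
        have h := hdr.comp s hdκy
        exact h
      have hlin : HasDerivAt (fun u : ℝ => u / Tc) (1 / Tc) s := by
        simpa using (hasDerivAt_id s).div_const Tc
      have hsum := hdrκy.add hlin
      have hzero : (1 - p) * κ (y s) ^ (1 - p - 1) * (κ' (y s) * y' s) + 1 / Tc = 0 := by
        rw [hy_ode s hs.1 hys]
        have hexp : (1:ℝ) - p - 1 = -p := by ring
        rw [hexp]
        have hκv := (hκ' (y s) hys).2
        have hab : κ (y s) ^ (-p) * κ (y s) ^ p = 1 := by
          rw [← Real.rpow_add hκys]
          simp
        set a := κ (y s) ^ (-p) with hA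
        set b := κ (y s) ^ p with hB
        field_simp
        first
        | linear_combination ((1 - p) * Tc) * hab
        | linear_combination ((p - 1) * (κ' (y s) + 1) * Tc) * hab
        | linear_combination ((1 - p) * (κ' (y s) + 1) * Tc) * hab
        | linear_combination ((1 - p) * κ' (y s) * Tc) * hab
        | linear_combination ((p - 1) * κ' (y s) * Tc) * hab
        | linear_combination ((p - 1) * Tc) * hab
        | linear_combination -hab
      rw [hzero] at hsum
      exact hsum
    have hFc : ContinuousOn F (Set.Icc 0 t) := by
      apply ContinuousOn.add
      · apply ContinuousOn.rpow_const
        · apply hκcont.comp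
          · exact fun s hs => ((hy_deriv s hs.1).continuousAt).continuousWithinAt
          · exact fun s hs => hy_nonneg s hs.1
        · exact fun s _ => Or.inr (le_of_lt h1p)
      · exact (continuous_id.div_const Tc).continuousOn
    have := constant_of_has_deriv_right_zero hFc
      (fun s hs => (hFd s hs).hasDerivWithinAt) t (Set.right_mem_Icc.2 ht)
    simpa [hF] using this
  rcases lt_or_eq_of_le (hy_nonneg 0 le_rfl) with hy0 | hy0
  · -- y 0 > 0
    have hc0 : 0 < κ (y 0) := hκpos _ hy0
    set T0 : ℝ := Tc * κ (y 0) ^ (1 - p) with hT0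
    have hT0pos : 0 < T0 := by positivity
    set Z : Set ℝ := {s | 0 ≤ s ∧ y s = 0} with hZ
    have hZne : Z.Nonempty := by
      by_contra hemp
      have hallpos : ∀ s : ℝ, 0 ≤ s → 0 < y s := fun s hs =>
        (hy_nonneg s hs).lt_of_ne fun h => hemp ⟨s, hs, h.symm⟩
      have hbig : (0:ℝ) ≤ T0 + Tc := by positivity
      have := keyA (T0 + Tc) hbig (fun s hs => hallpos s hs.1)
      have hpos2 : 0 < κ (y (T0 + Tc)) ^ (1 - p) :=
        Real.rpow_pos_of_pos (hκpos _ (hallpos _ hbig)) _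
      have : κ (y (T0 + Tc)) ^ (1 - p) + (T0 + Tc) / Tc = κ (y 0) ^ (1 - p) := this
      have hdiv : (T0 + Tc) / Tc = κ (y 0) ^ (1 - p) + 1 := by
        rw [hT0]; field_simp
      rw [hdiv] at this
      linarith
    have hZbdd : BddBelow Z := ⟨0, fun s hs => hs.1⟩
    set τ : ℝ := sInf Z with hτ
    have hτ0 : 0 ≤ τ := le_csInf hZne fun s hs => hs.1
    have hyτ : y τ = 0 := by
      by_contra hne
      have hyτpos : 0 < y τ := lt_of_le_of_ne (hy_nonneg τ hτ0) (Ne.symm hne)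
      have hcont : ContinuousAt y τ := (hy_deriv τ hτ0).continuousAt
      have hmem : y ⁻¹' Set.Ioi 0 ∈ nhds τ := hcont.preimage_mem_nhds (Ioi_mem_nhds hyτpos)
      obtain ⟨ε, hε, hball⟩ := Metric.mem_nhds_iff.1 hmem
      obtain ⟨s, hsZ, hsτ⟩ := exists_lt_of_csInf_lt hZne (show sInf Z < τ + ε by
        rw [← hτ]; linarith)
      have hτs : τ ≤ s := csInf_le hZbdd hsZ
      have : s ∈ Metric.ball τ ε := by
        rw [Metric.mem_ball, Real.dist_eq, abs_of_nonneg (by linarith)]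
        linarith
      have := hball this
      simp only [Set.mem_preimage, Set.mem_Ioi] at this
      rw [hsZ.2] at this
      exact lt_irrefl 0 this
    have hpos_before : ∀ s : ℝ, 0 ≤ s → s < τ → 0 < y s := by
      intro s hs hsτ
      rcases lt_or_eq_of_le (hy_nonneg s hs) with h | h
      · exact h
      · exact absurd (csInf_le hZbdd ⟨hs, h.symm⟩) (not_le.2 hsτ)
    have hτT0 : τ = T0 := by
      have := keyA τ hτ0 (fun s hs => hpos_before s hs.1 hs.2)
      rw [hyτ, hκ0, Real.zero_rpow h1p'] at this
      rw [hT0]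
      field_simp at this ⊢
      linarith
    have hafter : ∀ t : ℝ, T0 ≤ t → y t = 0 := by
      intro t htT0
      have ht0 : 0 ≤ t := le_trans (le_of_lt hT0pos) htT0
      have := yanti (Set.mem_Ici.2 hτ0) (Set.mem_Ici.2 ht0) (hτT0 ▸ htT0)
      rw [hyτ] at this
      exact le_antisymm this (hy_nonneg t ht0)
    constructor
    · intro t ht
      rcases lt_or_eq_of_le ht.2 with hlt | heq
      · -- t < T0 = τ
        have hyt : 0 < y t := hpos_before t ht.1 (hτT0 ▸ hlt)
        have hκyt : 0 < κ (y t) := hκpos _ hyt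
        have hkey := keyA t ht.1 (fun s hs => hpos_before s hs.1 (lt_trans hs.2 (hτT0 ▸ hlt)))
        have heq2 : κ (y t) ^ (1 - p) = κ (y 0) ^ (1 - p) - t / Tc := by linarith
        rw [← heq2, ← Real.rpow_mul (le_of_lt hκyt), mul_one_div_cancel h1p',
          Real.rpow_one]
      · -- t = T0
        have hyt : y t = 0 := hafter t (le_of_eq heq.symm)
        rw [hyt, hκ0]
        have : κ (y 0) ^ (1 - p) - t / Tc = 0 := by
          rw [heq, hT0]; field_simp; ring
        rw [this, Real.zero_rpow (by positivity : (1:ℝ)/(1-p) ≠ 0)]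
    · exact fun t ht => hafter t ht
  · -- y 0 = 0
    have hκy0 : κ (y 0) = 0 := by rw [← hy0, hκ0]
    have hT0 : Tc * κ (y 0) ^ (1 - p) = 0 := by
      rw [hκy0, Real.zero_rpow h1p', mul_zero]
    constructor
    · intro t ht
      rw [hT0] at ht
      have ht0 : t = 0 := le_antisymm ht.2 ht.1
      rw [ht0, hκy0, Real.zero_rpow h1p', zero_div, sub_zero,
        Real.zero_rpow (by positivity : (1:ℝ)/(1-p) ≠ 0)]
    · intro t ht
      rw [hT0] at ht
      have := yanti (Set.mem_Ici.2 (le_refl (0:ℝ))) (Set.mem_Ici.2 ht) ht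
      rw [← hy0] at this
      exact le_antisymm this (hy_nonneg t ht)
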